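/- arXiv:1706.02840 — 3 statements merged into one kernel-verified Lean document; each statement's English description precedes it below -/
import Mathlib

section
/- Let n ≥ 2 and m ≥ 1 be integers, let q, p be complex polynomials with deg q = n and deg p ≤ n, let γ ≠ 0 be the leading coefficient of q, and suppose the Lens polynomial ℓ(z) = (conj z)·q(z) − p(z) has exactly k roots α_1, …, α_k, all simple. For t ∈ ℂ, t ≠ 0, define φ_t(z) = (((t·conj z + γ)^m − γ^m)/(γ^{m−1}·m·t))·q(z) − p(z). Then for every δ > 0 smaller than half the minimal distance between distinct α_j, there exists ε > 0 such that for every t ∈ ℂ with 0 < |t| < ε and every j ∈ {1, …, k}, the function φ_t has exactly one root in the closed disk {z : |z − α_j| ≤ δ}, this root is simple, and its sign equals the sign of the root α_j of ℓ. -/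
open Complex Polynomial

/-- The Lens polynomial associated to complex polynomials `q, p`:
`z ↦ conj z * q(z) - p(z)`. -/
noncomputable def lensFun (q p : Polynomial ℂ) : ℂ → ℂ :=
  fun z => (starRingEnd ℂ) z * q.eval z - p.eval z

/-- `α` is a simple root of `f : ℂ → ℂ` if `f α = 0` and the real Fréchet
derivative of `f` at `α` is invertible. -/
def IsSimpleRoot (f : ℂ → ℂ) (α : ℂ) : Prop :=
  f α = 0 ∧ Function.Bijective ⇑(fderiv ℝ f α)

/-- The determinant of the real Fréchet derivative of `f : ℂ → ℂ` at `α`.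
Its sign is the sign of the root `α`. -/
noncomputable def fderivDet (f : ℂ → ℂ) (α : ℂ) : ℝ :=
  LinearMap.det (fderiv ℝ f α).toLinearMap

/-- The member `φ_t` of the bifurcation family of a Lens polynomial inside the
class of generalized Lens polynomials, where `γ` is the leading coefficient
of `q`. -/
noncomputable def phiFam (q p : Polynomial ℂ) (m : ℕ) (t : ℂ) : ℂ → ℂ :=
  fun z =>
    (((t * (starRingEnd ℂ) z + q.leadingCoeff) ^ m - q.leadingCoeff ^ m) /
        (q.leadingCoeff ^ (m - 1) * m * t)) * q.eval z - p.eval z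

noncomputable def Psi (q p : Polynomial ℂ) (m : ℕ) : ℂ × ℂ → ℂ := fun x =>
  ((∑ i ∈ Finset.range m, (m.choose (i + 1) : ℂ) * q.leadingCoeff ^ (m - 1 - i) * x.1 ^ i *
      ((starRingEnd ℂ) x.2) ^ (i + 1)) / (q.leadingCoeff ^ (m - 1) * m)) * q.eval x.2 - p.eval x.2

lemma contDiff_eval_aux (q : Polynomial ℂ) : ContDiff ℝ 1 fun z : ℂ => q.eval z := by
  have h : ContDiff ℝ 1 fun z : ℂ =>
      ∑ i ∈ Finset.range (q.natDegree + 1), q.coeff i * z ^ i :=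
    ContDiff.sum fun i _ => contDiff_const.mul (contDiff_id.pow i)
  have he : (fun z : ℂ => q.eval z)
      = fun z : ℂ => ∑ i ∈ Finset.range (q.natDegree + 1), q.coeff i * z ^ i :=
    funext fun z => q.eval_eq_sum_range z
  rw [he]; exact h

lemma contDiff_conj_aux : ContDiff ℝ 1 fun z : ℂ => (starRingEnd ℂ) z := by
  exact (Complex.conjCLE.toContinuousLinearMap).contDiff

lemma Psi_contDiff (q p : Polynomial ℂ) (m : ℕ) : ContDiff ℝ 1 (Psi q p m) := by
  unfold Psi
  refine ContDiff.sub ?_ ((contDiff_eval_aux p).comp contDiff_snd)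
  refine ContDiff.mul (ContDiff.div_const ?_ _) ((contDiff_eval_aux q).comp contDiff_snd)
  refine ContDiff.sum fun i _ => ?_
  exact ((contDiff_const.mul (contDiff_fst.pow i)).mul
    ((contDiff_conj_aux.comp contDiff_snd).pow (i + 1)))

lemma Psi_zero (q p : Polynomial ℂ) {m : ℕ} (hm : 1 ≤ m) (hγ : q.leadingCoeff ≠ 0) (z : ℂ) :
    Psi q p m (0, z) = lensFun q p z := by
  have hmC : (m : ℂ) ≠ 0 := Nat.cast_ne_zero.2 (by omega)
  have hγp : q.leadingCoeff ^ (m - 1) ≠ 0 := pow_ne_zero _ hγ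
  unfold Psi lensFun
  simp only
  have hsum : (∑ i ∈ Finset.range m, (m.choose (i + 1) : ℂ) * q.leadingCoeff ^ (m - 1 - i) *
        (0 : ℂ) ^ i * ((starRingEnd ℂ) z) ^ (i + 1))
      = (m : ℂ) * q.leadingCoeff ^ (m - 1) * (starRingEnd ℂ) z := by
    rw [Finset.sum_eq_single 0]
    · simp [Nat.choose_one_right]
    · intro i _ hne
      simp [zero_pow hne]
    · intro h
      simp only [Finset.mem_range] at h
      omega
  rw [hsum]
  have hdiv : (m : ℂ) * q.leadingCoeff ^ (m - 1) * (starRingEnd ℂ) z /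
      (q.leadingCoeff ^ (m - 1) * m) = (starRingEnd ℂ) z := by
    field_simp
  rw [hdiv]

lemma Psi_t (q p : Polynomial ℂ) {m : ℕ} (hm : 1 ≤ m) (hγ : q.leadingCoeff ≠ 0)
    {t : ℂ} (ht : t ≠ 0) (z : ℂ) : Psi q p m (t, z) = phiFam q p m t z := by
  have hmC : (m : ℂ) ≠ 0 := Nat.cast_ne_zero.2 (by omega)
  have hγp : q.leadingCoeff ^ (m - 1) ≠ 0 := pow_ne_zero _ hγ
  unfold Psi phiFam
  simp only
  set γ := q.leadingCoeff
  set w := (starRingEnd ℂ) z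
  set S := ∑ i ∈ Finset.range m, (m.choose (i + 1) : ℂ) * γ ^ (m - 1 - i) * t ^ i * w ^ (i + 1)
    with hS
  have hb : (t * w + γ) ^ m - γ ^ m = t * S := by
    rw [add_pow]
    rw [Finset.sum_range_succ' _ m]
    simp only [pow_zero, one_mul, Nat.choose_zero_right, Nat.cast_one, mul_one, Nat.sub_zero]
    rw [add_sub_cancel_right, hS, Finset.mul_sum]
    refine Finset.sum_congr rfl fun i hi => ?_
    have h1 : m - (i + 1) = m - 1 - i := by omega
    rw [h1, mul_pow]
    ring
  rw [hb]
  have hdiv : t * S / (γ ^ (m - 1) * m * t) = S / (γ ^ (m - 1) * m) := by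
    field_simp
  rw [hdiv]

lemma det_ne_zero_of_bijective {L : ℂ →L[ℝ] ℂ} (h : Function.Bijective ⇑L) : L.det ≠ 0 := by
  have h' : Function.Bijective ⇑(L : ℂ →ₗ[ℝ] ℂ) := h
  have hu := (LinearEquiv.ofBijective (L : ℂ →ₗ[ℝ] ℂ) h').isUnit_det'
  have hcoe : ((LinearEquiv.ofBijective (L : ℂ →ₗ[ℝ] ℂ) h') : ℂ →ₗ[ℝ] ℂ) = (L : ℂ →ₗ[ℝ] ℂ) :=
    LinearMap.ext fun x => rfl
  rw [hcoe] at hu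
  exact hu.ne_zero

lemma bijective_of_det_ne_zero {L : ℂ →L[ℝ] ℂ} (h : L.det ≠ 0) : Function.Bijective ⇑L := by
  have hb := (L.toContinuousLinearEquivOfDetNeZero h).bijective
  have hcoe : ⇑(L.toContinuousLinearEquivOfDetNeZero h) = ⇑L :=
    funext fun x => L.toContinuousLinearEquivOfDetNeZero_apply h x
  rwa [hcoe] at hb

lemma key_persistence (Ψ : ℂ × ℂ → ℂ) (hΨ : ContDiff ℝ 1 Ψ) (a : ℂ)
    (h0 : Ψ (0, a) = 0)
    (hbij : Function.Bijective ⇑(fderiv ℝ (fun z => Ψ (0, z)) a))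
    (δ : ℝ) (hδ : 0 < δ)
    (hann : ∀ z : ℂ, ‖z - a‖ ≤ δ → Ψ (0, z) = 0 → z = a) :
    ∃ ε : ℝ, 0 < ε ∧ ∀ t : ℂ, ‖t‖ < ε →
      ∃ z : ℂ, ‖z - a‖ ≤ δ ∧ Ψ (t, z) = 0 ∧
        (fderiv ℝ (fun w => Ψ (t, w)) z).det ≠ 0 ∧
        Real.sign ((fderiv ℝ (fun w => Ψ (t, w)) z).det)
          = Real.sign ((fderiv ℝ (fun w => Ψ (0, w)) a).det) ∧
        ∀ w : ℂ, ‖w - a‖ ≤ δ → Ψ (t, w) = 0 → w = z := by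
  classical
  have hdiff : Differentiable ℝ Ψ := hΨ.differentiable one_ne_zero
  have hpart : ∀ s b : ℂ, fderiv ℝ (fun w => Ψ (s, w)) b
      = (fderiv ℝ Ψ (s, b)).comp (ContinuousLinearMap.inr ℝ ℂ ℂ) := by
    intro s b
    have h1 := (hdiff (s, b)).hasFDerivAt
    have h2 := hasFDerivAt_prodMk_right (𝕜 := ℝ) s b
    exact (h1.comp b h2).fderiv
  set D : ℂ × ℂ → ℝ := fun x => ((fderiv ℝ Ψ x).comp (ContinuousLinearMap.inr ℝ ℂ ℂ)).det
    with hD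
  have hDcont : Continuous D := by
    have hcomp : Continuous fun L : (ℂ × ℂ) →L[ℝ] ℂ =>
        L.comp (ContinuousLinearMap.inr ℝ ℂ ℂ) :=
      ((ContinuousLinearMap.compL ℝ ℂ (ℂ × ℂ) ℂ).flip (ContinuousLinearMap.inr ℝ ℂ ℂ)).continuous
    exact ContinuousLinearMap.continuous_det.comp (hcomp.comp (hΨ.continuous_fderiv one_ne_zero))
  set pt : ℂ × ℂ := (0, a) with hpt
  set F : (ℂ × ℂ) →L[ℝ] ℂ := fderiv ℝ Ψ pt with hF
  have hB0 : fderiv ℝ (fun z => Ψ (0, z)) a = F.comp (ContinuousLinearMap.inr ℝ ℂ ℂ) :=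
    hpart 0 a
  have hbij0 : Function.Bijective ⇑(F.comp (ContinuousLinearMap.inr ℝ ℂ ℂ)) := by
    rw [← hB0]; exact hbij
  have hd0 : D pt ≠ 0 := det_ne_zero_of_bijective hbij0
  set DΦ : (ℂ × ℂ) →L[ℝ] (ℂ × ℂ) := (ContinuousLinearMap.fst ℝ ℂ ℂ).prod F with hDΦ
  have hDΦapp : ∀ x : ℂ × ℂ, DΦ x = (x.1, F x) := fun x => rfl
  have hFsplit : ∀ x : ℂ × ℂ, F x = F (x.1, 0) + F (0, x.2) := by
    intro x
    rw [← map_add]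
    congr 1
    simp
  have hbijD : Function.Bijective ⇑DΦ := by
    constructor
    · rintro ⟨t₁, z₁⟩ ⟨t₂, z₂⟩ h
      have h1 : t₁ = t₂ := congrArg Prod.fst h
      have h2 : F (t₁, z₁) = F (t₂, z₂) := congrArg Prod.snd h
      rw [hFsplit (t₁, z₁), hFsplit (t₂, z₂)] at h2
      simp only at h2
      rw [h1] at h2
      have h3 : F (0, z₁) = F (0, z₂) := add_left_cancel h2
      have h4 : z₁ = z₂ := hbij0.1 h3
      rw [h1, h4]
    · rintro ⟨τ, η⟩
      obtain ⟨ζ, hζ⟩ := hbij0.2 (η - F (τ, 0))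
      refine ⟨(τ, ζ), ?_⟩
      rw [hDΦapp]
      have hFζ : F (τ, ζ) = η := by
        rw [hFsplit (τ, ζ)]
        simp only
        have h5 : F (0, ζ) = η - F (τ, 0) := hζ
        rw [h5]; ring
      rw [hFζ]
  have hbijD' : Function.Bijective ⇑(DΦ : (ℂ × ℂ) →ₗ[ℝ] (ℂ × ℂ)) := hbijD
  set Eqv : (ℂ × ℂ) ≃L[ℝ] (ℂ × ℂ) :=
    (LinearEquiv.ofBijective (DΦ : (ℂ × ℂ) →ₗ[ℝ] (ℂ × ℂ)) hbijD').toContinuousLinearEquiv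
    with hEqv
  have hEqvcoe : (Eqv : (ℂ × ℂ) →L[ℝ] (ℂ × ℂ)) = DΦ := by ext x <;> rfl
  set Φ : ℂ × ℂ → ℂ × ℂ := fun x => (x.1, Ψ x) with hΦdef
  have hΦstrict : HasStrictFDerivAt Φ (Eqv : (ℂ × ℂ) →L[ℝ] (ℂ × ℂ)) pt := by
    rw [hEqvcoe, hDΦ]
    exact (ContinuousLinearMap.fst ℝ ℂ ℂ).hasStrictFDerivAt.prodMk (hΨ.hasStrictFDerivAt one_ne_zero)
  set inv : ℂ × ℂ → ℂ × ℂ := hΦstrict.localInverse Φ Eqv pt with hinv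
  have hΦpt : Φ pt = ((0 : ℂ), (0 : ℂ)) := by
    show (pt.1, Ψ pt) = ((0 : ℂ), (0 : ℂ))
    rw [hpt]
    simp [← hpt, h0]
  have hleft : ∀ᶠ x in nhds pt, inv (Φ x) = x := hΦstrict.eventually_left_inverse
  have hright : ∀ᶠ y in nhds ((0 : ℂ), (0 : ℂ)), Φ (inv y) = y := by
    have h6 := hΦstrict.eventually_right_inverse
    rwa [hΦpt] at h6
  have hcont : ContinuousAt inv ((0 : ℂ), (0 : ℂ)) := by
    have h7 := hΦstrict.localInverse_continuousAt
    rwa [hΦpt] at h7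
  have hinv00 : inv ((0 : ℂ), (0 : ℂ)) = pt := by
    have h8 := hΦstrict.localInverse_apply_image
    rwa [hΦpt] at h8
  have hS : IsOpen {x : ℂ × ℂ | 0 < D x * D pt} :=
    isOpen_lt continuous_const (hDcont.mul continuous_const)
  have hptS : pt ∈ {x : ℂ × ℂ | 0 < D x * D pt} := by
    simpa using mul_self_pos.2 hd0
  have hnhds : ({x : ℂ × ℂ | inv (Φ x) = x} ∩ {x | 0 < D x * D pt}) ∈ nhds pt :=
    Filter.inter_mem hleft (hS.mem_nhds hptS)
  obtain ⟨r, hr0, hrsub⟩ := Metric.mem_nhds_iff.1 hnhds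
  set ρ : ℝ := min (r / 2) δ with hρ
  have hρ0 : 0 < ρ := lt_min (by linarith) hδ
  have hρδ : ρ ≤ δ := min_le_right _ _
  have hρr : ρ < r := lt_of_le_of_lt (min_le_left _ _) (by linarith)
  set A : Set ℂ := Metric.closedBall a δ \ Metric.ball a ρ with hA
  have hAcompact : IsCompact A := (isCompact_closedBall a δ).diff Metric.isOpen_ball
  have hA0 : ∀ z ∈ A, Ψ (0, z) ≠ 0 := by
    rintro z ⟨hz1, hz2⟩ hz0
    have hz1' : ‖z - a‖ ≤ δ := by rwa [Metric.mem_closedBall, dist_eq_norm] at hz1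
    have hza := hann z hz1' hz0
    apply hz2
    rw [hza]
    exact Metric.mem_ball_self hρ0
  have hopen : IsOpen {x : ℂ × ℂ | Ψ x ≠ 0} := isOpen_compl_singleton.preimage hΨ.continuous
  have hsub : ({(0 : ℂ)} ×ˢ A) ⊆ {x : ℂ × ℂ | Ψ x ≠ 0} := by
    rintro ⟨s, z⟩ ⟨hs, hz⟩
    rw [Set.mem_singleton_iff] at hs
    subst hs
    exact hA0 z hz
  obtain ⟨u, v, hu, hv, h0u, hAv, huv⟩ :=
    generalized_tube_lemma isCompact_singleton hAcompact hopen hsub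
  obtain ⟨ε₁, hε₁0, hε₁⟩ := Metric.isOpen_iff.1 hu 0 (h0u (Set.mem_singleton 0))
  obtain ⟨ε₂, hε₂0, hε₂⟩ := Metric.eventually_nhds_iff_ball.1 hright
  obtain ⟨ε₃, hε₃0, hε₃⟩ := Metric.continuousAt_iff.1 hcont ρ hρ0
  refine ⟨min (min ε₁ ε₂) (min ε₃ ρ), lt_min (lt_min hε₁0 hε₂0) (lt_min hε₃0 hρ0), ?_⟩
  intro t ht
  have ht1 : ‖t‖ < ε₁ := lt_of_lt_of_le ht (le_trans (min_le_left _ _) (min_le_left _ _))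
  have ht2 : ‖t‖ < ε₂ := lt_of_lt_of_le ht (le_trans (min_le_left _ _) (min_le_right _ _))
  have ht3 : ‖t‖ < ε₃ := lt_of_lt_of_le ht (le_trans (min_le_right _ _) (min_le_left _ _))
  have htρ : ‖t‖ < ρ := lt_of_lt_of_le ht (le_trans (min_le_right _ _) (min_le_right _ _))
  have hdisty : dist ((t, 0) : ℂ × ℂ) ((0 : ℂ), (0 : ℂ)) = ‖t‖ := by
    rw [Prod.dist_eq]
    simp [dist_zero_right]
  have hy2 : Φ (inv (t, 0)) = (t, 0) := by
    apply hε₂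
    rw [Metric.mem_ball, hdisty]
    exact ht2
  have hyclose : dist (inv (t, 0)) pt < ρ := by
    have h9 := hε₃ (show dist ((t, 0) : ℂ × ℂ) ((0 : ℂ), (0 : ℂ)) < ε₃ by
      rw [hdisty]; exact ht3)
    rwa [hinv00] at h9
  set x : ℂ × ℂ := inv (t, 0) with hx
  have hx1 : x.1 = t := congrArg Prod.fst hy2
  have hx0 : Ψ x = 0 := congrArg Prod.snd hy2
  have hxeq : ((t, x.2) : ℂ × ℂ) = x := Prod.ext hx1.symm rfl
  have hxz : ‖x.2 - a‖ < ρ := by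
    have h10 : dist x.2 a ≤ dist x pt := by
      rw [Prod.dist_eq]
      exact le_max_right _ _
    rw [← dist_eq_norm]
    exact lt_of_le_of_lt h10 hyclose
  have hxball : x ∈ Metric.ball pt r := by
    rw [Metric.mem_ball]
    exact lt_trans hyclose hρr
  have hxS : 0 < D (t, x.2) * D pt := by
    rw [hxeq]
    exact (hrsub hxball).2
  refine ⟨x.2, le_of_lt (lt_of_lt_of_le hxz hρδ), ?_, ?_, ?_, ?_⟩
  · rw [hxeq]; exact hx0
  · rw [hpart t x.2]
    intro hcontra
    have hD2 : D (t, x.2) = 0 := hcontra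
    rw [hD2, zero_mul] at hxS
    exact lt_irrefl 0 hxS
  · rw [hpart t x.2, hpart 0 a]
    have hgoal : Real.sign (D (t, x.2)) = Real.sign (D pt) := by
      rcases mul_pos_iff.1 hxS with ⟨hp1, hp2⟩ | ⟨hp1, hp2⟩
      · rw [Real.sign_of_pos hp1, Real.sign_of_pos hp2]
      · rw [Real.sign_of_neg hp1, Real.sign_of_neg hp2]
    exact hgoal
  · intro w hw hw0
    by_cases hwρ : ‖w - a‖ < ρ
    · have hball : ((t, w) : ℂ × ℂ) ∈ Metric.ball pt r := by
        rw [Metric.mem_ball, Prod.dist_eq]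
        apply max_lt
        · show dist t (0 : ℂ) < r
          rw [dist_zero_right]
          exact lt_trans htρ hρr
        · show dist w a < r
          rw [dist_eq_norm]
          exact lt_trans hwρ hρr
      have hlinv : inv (Φ (t, w)) = (t, w) := (hrsub hball).1
      have hΦtw : Φ ((t, w) : ℂ × ℂ) = (t, 0) := by
        show (((t, w) : ℂ × ℂ).1, Ψ (t, w)) = (t, 0)
        rw [hw0]
      rw [hΦtw] at hlinv
      have hxw : x = (t, w) := hlinv
      exact (congrArg Prod.snd hxw).symm
    · exfalso
      push_neg at hwρ
      have hwA : w ∈ A := by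
        constructor
        · rw [Metric.mem_closedBall, dist_eq_norm]; exact hw
        · rw [Metric.mem_ball, dist_eq_norm]
          exact not_lt.2 hwρ
      have hmem : ((t, w) : ℂ × ℂ) ∈ u ×ˢ v := by
        constructor
        · apply hε₁
          rw [Metric.mem_ball, dist_zero_right]
          exact ht1
        · exact hAv hwA
      exact huv hmem hw0

/-- Persistence of the roots of the Lens polynomial `ℓ` in the bifurcation
family `φ_t`: for every small enough `δ > 0` (smaller than half the minimal
distance between the distinct roots `α_j` of `ℓ`) and every small enough
`t ≠ 0`, the function `φ_t` has exactly one root in each closed disk of radius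
`δ` around `α_j`; this root is simple and has the same sign as `α_j`. -/

theorem phi_family_roots_near_original_roots
    (n m k : ℕ) (hn : 2 ≤ n) (hm : 1 ≤ m)
    (q p : Polynomial ℂ) (hq : q.natDegree = n) (hp : p.degree ≤ (n : ℕ))
    (hγ : q.leadingCoeff ≠ 0)
    (α : Fin k → ℂ) (hαinj : Function.Injective α)
    (hroots : {z : ℂ | lensFun q p z = 0} = Set.range α)
    (hsimple : ∀ j, IsSimpleRoot (lensFun q p) (α j)) :
    ∀ δ : ℝ, 0 < δ → (∀ i j : Fin k, i ≠ j → 2 * δ < ‖α i - α j‖) →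
      ∃ ε : ℝ, 0 < ε ∧ ∀ t : ℂ, 0 < ‖t‖ → ‖t‖ < ε → ∀ j : Fin k,
        ∃ z : ℂ, ‖z - α j‖ ≤ δ ∧ phiFam q p m t z = 0 ∧
          IsSimpleRoot (phiFam q p m t) z ∧
          Real.sign (fderivDet (phiFam q p m t) z) =
            Real.sign (fderivDet (lensFun q p) (α j)) ∧
          ∀ w : ℂ, ‖w - α j‖ ≤ δ → phiFam q p m t w = 0 → w = z := by
  intro δ hδ hsep
  classical
  have hfun0 : (fun z => Psi q p m (0, z)) = lensFun q p :=
    funext fun z => Psi_zero q p hm hγ z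
  have H : ∀ j : Fin k, ∃ ε : ℝ, 0 < ε ∧ ∀ t : ℂ, ‖t‖ < ε →
      ∃ z : ℂ, ‖z - α j‖ ≤ δ ∧ Psi q p m (t, z) = 0 ∧
        (fderiv ℝ (fun w => Psi q p m (t, w)) z).det ≠ 0 ∧
        Real.sign ((fderiv ℝ (fun w => Psi q p m (t, w)) z).det)
          = Real.sign ((fderiv ℝ (fun w => Psi q p m (0, w)) (α j)).det) ∧
        ∀ w : ℂ, ‖w - α j‖ ≤ δ → Psi q p m (t, w) = 0 → w = z := by
    intro j
    apply key_persistence (Psi q p m) (Psi_contDiff q p m) (α j)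
    · rw [Psi_zero q p hm hγ]
      exact (hsimple j).1
    · rw [hfun0]
      exact (hsimple j).2
    · exact hδ
    · intro z hz hz0
      have hlz : lensFun q p z = 0 := by
        rw [← Psi_zero q p hm hγ z]
        exact hz0
      have hzr : z ∈ Set.range α := by
        rw [← hroots]
        exact hlz
      obtain ⟨i, rfl⟩ := hzr
      by_cases hij : i = j
      · rw [hij]
      · exfalso
        have := hsep i j hij
        linarith
  choose E hE using H
  by_cases hk : k = 0
  · subst hk
    exact ⟨1, one_pos, fun t _ _ j => j.elim0⟩
  · have hne : Nonempty (Fin k) := ⟨⟨0, Nat.pos_of_ne_zero hk⟩⟩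
    have hune : (Finset.univ : Finset (Fin k)).Nonempty := Finset.univ_nonempty
    refine ⟨Finset.univ.inf' hune E, ?_, ?_⟩
    · rw [Finset.lt_inf'_iff]
      exact fun j _ => (hE j).1
    · intro t ht0 htε j
      have htj : ‖t‖ < E j :=
        lt_of_lt_of_le htε (Finset.inf'_le _ (Finset.mem_univ j))
      obtain ⟨z, hz1, hz2, hz3, hz4, hz5⟩ := (hE j).2 t htj
      have ht : t ≠ 0 := norm_pos_iff.1 ht0
      have hfunt : phiFam q p m t = fun w => Psi q p m (t, w) :=
        funext fun w => (Psi_t q p hm hγ ht w).symm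
      refine ⟨z, hz1, ?_, ⟨?_, ?_⟩, ?_, ?_⟩
      · rw [hfunt]
        exact hz2
      · rw [hfunt]
        exact hz2
      · rw [hfunt]
        exact bijective_of_det_ne_zero hz3
      · show Real.sign ((fderiv ℝ (phiFam q p m t) z).det)
            = Real.sign ((fderiv ℝ (lensFun q p) (α j)).det)
        rw [hfunt, ← hfun0]
        exact hz4
      · intro w hw hw0
        apply hz5 w hw
        rw [hfunt] at hw0
        exact hw0
end

section
/- Let n > m ≥ 1 be integers and let f : ℂ → ℂ be given by f(z) = (conj z)^m · z^n − 1. Then f has exactly n − m roots (namely the (n−m)-th roots of unity), and every root of f is a simple positive root. In particular ρ(f) = n − m, so the minimal possible value n − m of ρ is attained within the class of generalized Lens polynomials of type (n, m). -/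
open Complex Polynomial

/-! ### Auxiliary lemmas -/

lemma lens_pow_eq_one_real {x : ℝ} (hx : 0 ≤ x) {k : ℕ} (hk : k ≠ 0) (h : x ^ k = 1) :
    x = 1 := by
  rcases lt_trichotomy x 1 with h1 | h1 | h1
  · exact absurd h (by nlinarith [pow_lt_one₀ hx h1 hk])
  · exact h1
  · exact absurd h (by nlinarith [one_lt_pow₀ h1 hk])

/-- Complex conjugation as a continuous `ℝ`-linear map. -/
noncomputable def lensConjCLM : ℂ →L[ℝ] ℂ :=
  (Complex.conjCLE : ℂ ≃L[ℝ] ℂ).toContinuousLinearMap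

lemma lens_det_aux (a b : ℂ) :
    LinearMap.det ((a • ContinuousLinearMap.id ℝ ℂ + b • lensConjCLM).toLinearMap)
      = Complex.normSq a - Complex.normSq b := by
  rw [← LinearMap.det_toMatrix Complex.basisOneI, Matrix.det_fin_two]
  simp [LinearMap.toMatrix_apply, Complex.coe_basisOneI_repr, Complex.coe_basisOneI,
    Complex.normSq_apply, lensConjCLM]
  ring

lemma lens_hasFDerivAt_pow_comp {φ : ℂ → ℂ} {L : ℂ →L[ℝ] ℂ} {α : ℂ}
    (hφ : HasFDerivAt φ L α) (m : ℕ) :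
    HasFDerivAt (fun z => φ z ^ (m + 1)) ((((m : ℂ) + 1) * φ α ^ m) • L) α := by
  induction m with
  | zero => simpa using hφ
  | succ k ih =>
      have h : HasFDerivAt (fun z => φ z ^ (k + 1) * φ z) _ α := ih.mul hφ
      have heq : (fun z => φ z ^ (k + 1) * φ z) = fun z => φ z ^ (k + 1 + 1) := by
        funext z; ring
      rw [heq] at h
      convert h using 1
      rw [smul_smul, ← add_smul]
      congr 1
      push_cast
      ring

lemma lens_hasFDerivAt_conj (α : ℂ) :
    HasFDerivAt (fun z : ℂ => (starRingEnd ℂ) z) lensConjCLM α := by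
  have h := Complex.conjCLE.hasFDerivAt (x := α)
  have hc : ⇑Complex.conjCLE = fun z : ℂ => (starRingEnd ℂ) z := funext Complex.conjCLE_apply
  rw [hc] at h
  exact h

/-- The generalized Lens polynomial `f(z) = (conj z)^m z^n - 1` with
`n > m ≥ 1` has exactly the `(n-m)`-th roots of unity as roots, so exactly
`n - m` roots, and all of them are simple positive roots. -/
theorem generalized_lens_minimal_root_count
    (n m : ℕ) (hm : 1 ≤ m) (hmn : m < n)
    (f : ℂ → ℂ) (hf : f = fun z => ((starRingEnd ℂ) z) ^ m * z ^ n - 1) :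
    {z : ℂ | f z = 0} = {z : ℂ | z ^ (n - m) = 1} ∧
    ({z : ℂ | f z = 0}).Finite ∧
    ({z : ℂ | f z = 0}).ncard = n - m ∧
    ∀ α : ℂ, f α = 0 → IsSimpleRoot f α ∧ 0 < fderivDet f α := by
  have hk0 : 0 < n - m := Nat.sub_pos_of_lt hmn
  -- characterization of roots
  have key : ∀ z : ℂ, f z = 0 ↔ z ^ (n - m) = 1 := by
    intro z
    rw [hf]
    simp only []
    rw [sub_eq_zero]
    have hnm : m + (n - m) = n := Nat.add_sub_cancel' hmn.le
    have hzn : z ^ n = z ^ m * z ^ (n - m) := by rw [← pow_add, hnm]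
    have hid : ((starRingEnd ℂ) z) ^ m * z ^ n
        = ((Complex.normSq z : ℂ)) ^ m * z ^ (n - m) := by
      rw [hzn, ← mul_assoc, ← mul_pow, mul_comm ((starRingEnd ℂ) z) z, Complex.mul_conj]
    rw [hid]
    constructor
    · intro h
      have h2 : (Complex.normSq z * Complex.normSq z) ^ m * Complex.normSq z ^ (n - m) = 1 := by
        have := congrArg Complex.normSq h
        simpa [map_mul, map_pow, Complex.normSq_ofReal] using this
      have h3 : Complex.normSq z ^ (2 * m + (n - m)) = 1 := by
        rw [pow_add, pow_mul, sq]; exact h2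
      have hz1 : Complex.normSq z = 1 :=
        lens_pow_eq_one_real (Complex.normSq_nonneg z) (by omega) h3
      rw [hz1] at h
      simpa using h
    · intro h
      have hz1 : Complex.normSq z = 1 := by
        refine lens_pow_eq_one_real (Complex.normSq_nonneg z) hk0.ne' ?_
        rw [← map_pow, h, Complex.normSq_one]
      rw [hz1, h]
      simp
  have hset : {z : ℂ | f z = 0} = {z : ℂ | z ^ (n - m) = 1} :=
    Set.ext fun z => key z
  have hfinset : {z : ℂ | z ^ (n - m) = 1} = ↑(Polynomial.nthRootsFinset (n - m) (1 : ℂ)) := by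
    ext z
    simp [Polynomial.mem_nthRootsFinset hk0]
  have hcard : (Polynomial.nthRootsFinset (n - m) (1 : ℂ)).card = n - m :=
    (Complex.isPrimitiveRoot_exp (n - m) hk0.ne').card_nthRootsFinset
  refine ⟨hset, ?_, ?_, ?_⟩
  · rw [hset, hfinset]; exact (Polynomial.nthRootsFinset (n - m) (1 : ℂ)).finite_toSet
  · rw [hset, hfinset, Set.ncard_coe_finset, hcard]
  · intro α hα
    have hroot : α ^ (n - m) = 1 := (key α).mp hα
    have hnsq : Complex.normSq α = 1 := by
      refine lens_pow_eq_one_real (Complex.normSq_nonneg α) hk0.ne' ?_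
      rw [← map_pow, hroot, Complex.normSq_one]
    obtain ⟨m', rfl⟩ : ∃ m', m = m' + 1 := ⟨m - 1, by omega⟩
    obtain ⟨n', rfl⟩ : ∃ n', n = n' + 1 := ⟨n - 1, by omega⟩
    set a : ℂ := ((starRingEnd ℂ) α) ^ (m' + 1) * (((n' : ℂ) + 1) * α ^ n') with ha
    set b : ℂ := α ^ (n' + 1) * (((m' : ℂ) + 1) * ((starRingEnd ℂ) α) ^ m') with hb
    set D : ℂ →L[ℝ] ℂ := a • ContinuousLinearMap.id ℝ ℂ + b • lensConjCLM with hD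
    have h1 := lens_hasFDerivAt_pow_comp (lens_hasFDerivAt_conj α) m'
    have h2 := lens_hasFDerivAt_pow_comp (hasFDerivAt_id α) n'
    have hF : HasFDerivAt f D α := by
      rw [hf]
      have h3 := (h1.mul h2).sub_const 1
      refine h3.congr_fderiv ?_
      symm
      rw [hD, ha, hb, smul_smul, smul_smul]
      simp only [id]
    have hfd : fderiv ℝ f α = D := hF.fderiv
    -- determinant
    have hdet : fderivDet f α = Complex.normSq a - Complex.normSq b := by
      rw [fderivDet, hfd, hD, lens_det_aux]
    have hcast1 : ((n' : ℂ) + 1) = ((n' + 1 : ℕ) : ℂ) := by push_cast; ring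
    have hcast2 : ((m' : ℂ) + 1) = ((m' + 1 : ℕ) : ℂ) := by push_cast; ring
    have hnorm1 : Complex.normSq ((n' : ℂ) + 1) = ((n' : ℝ) + 1) * ((n' : ℝ) + 1) := by
      rw [hcast1, Complex.normSq_natCast]; push_cast; ring
    have hnorm2 : Complex.normSq ((m' : ℂ) + 1) = ((m' : ℝ) + 1) * ((m' : ℝ) + 1) := by
      rw [hcast2, Complex.normSq_natCast]; push_cast; ring
    have hna : Complex.normSq a = ((n' : ℝ) + 1) * ((n' : ℝ) + 1) := by
      rw [ha, map_mul, map_mul, map_pow, map_pow, Complex.normSq_conj, hnsq, hnorm1]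
      simp
    have hnb : Complex.normSq b = ((m' : ℝ) + 1) * ((m' : ℝ) + 1) := by
      rw [hb, map_mul, map_mul, map_pow, map_pow, Complex.normSq_conj, hnsq, hnorm2]
      simp
    have hlt : (m' : ℝ) < (n' : ℝ) := by exact_mod_cast (by omega : m' < n')
    have hpos : 0 < fderivDet f α := by
      rw [hdet, hna, hnb]; nlinarith
    have hne : LinearMap.det (fderiv ℝ f α).toLinearMap ≠ 0 := by
      have := hpos
      rw [fderivDet] at this
      exact ne_of_gt this
    refine ⟨⟨hα, ?_⟩, hpos⟩
    have hbij := (LinearMap.equivOfDetNeZero (fderiv ℝ f α).toLinearMap hne).bijective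
    have hc : ⇑(LinearMap.equivOfDetNeZero (fderiv ℝ f α).toLinearMap hne)
        = ⇑(fderiv ℝ f α) := by
      ext z
      exact DFunLike.congr_fun (LinearEquiv.coe_ofIsUnitDet _) z
    rwa [hc] at hbij
end

section
/- Let n ≥ 1 and m ≥ 1 be integers, let q, p be complex polynomials with deg q = n and deg p ≤ n, and let γ ≠ 0 be the leading coefficient of q. Fix t ∈ ℂ, t ≠ 0, and define φ_t(z) = (((t·conj z + γ)^m − γ^m)/(γ^{m−1}·m·t))·q(z) − p(z). Then there exist complex polynomials Q and P with deg Q = n and deg P ≤ n such that for all z ∈ ℂ, γ^{m−1}·m·t·φ_t(z) = (conj u)^m · Q(u) − P(u), where u = conj(t)·z + conj(γ). In other words, in the affine coordinate u, the function φ_t is (a nonzero constant multiple of) a generalized Lens polynomial of type (n, m). -/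
open Complex Polynomial

/-- In the affine coordinate `u = conj t * z + conj γ`, the function
`γ^(m-1) m t φ_t` is a generalized Lens polynomial of type `(n, m)`. -/
theorem phi_family_is_generalized_lens
    (n m : ℕ) (hn : 1 ≤ n) (hm : 1 ≤ m)
    (q p : Polynomial ℂ) (hq : q.natDegree = n) (hp : p.degree ≤ (n : ℕ))
    (hγ : q.leadingCoeff ≠ 0) (t : ℂ) (ht : t ≠ 0) :
    ∃ Q P : Polynomial ℂ, Q.natDegree = n ∧ P.degree ≤ (n : ℕ) ∧
      ∀ z : ℂ,
        q.leadingCoeff ^ (m - 1) * (m : ℂ) * t * phiFam q p m t z =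
          ((starRingEnd ℂ)
              ((starRingEnd ℂ) t * z + (starRingEnd ℂ) q.leadingCoeff)) ^ m *
            Q.eval ((starRingEnd ℂ) t * z + (starRingEnd ℂ) q.leadingCoeff)
          - P.eval ((starRingEnd ℂ) t * z + (starRingEnd ℂ) q.leadingCoeff) := by
  set γ := q.leadingCoeff with hγdef
  have hct : (starRingEnd ℂ) t ≠ 0 := by simpa using ht
  set L : Polynomial ℂ :=
    C ((starRingEnd ℂ) t)⁻¹ * X + C (-(((starRingEnd ℂ) t)⁻¹ * (starRingEnd ℂ) γ)) with hL
  have hLdeg : L.natDegree = 1 := by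
    rw [hL]
    exact Polynomial.natDegree_linear (inv_ne_zero hct)
  have hLeval : ∀ z : ℂ, L.eval ((starRingEnd ℂ) t * z + (starRingEnd ℂ) γ) = z := by
    intro z
    simp only [hL, eval_add, eval_mul, eval_C, eval_X, eval_neg]
    field_simp
    ring
  have hm0 : (m : ℂ) ≠ 0 := Nat.cast_ne_zero.mpr (by omega)
  have hq0 : q ≠ 0 := fun h => hγ (by simp [hγdef, h])
  refine ⟨q.comp L, C (γ ^ m) * q.comp L + C (γ ^ (m - 1) * m * t) * p.comp L, ?_, ?_, ?_⟩
  · rw [natDegree_comp, hLdeg, hq, mul_one]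
  · have h1 : (C (γ ^ m) * q.comp L).degree ≤ (n : ℕ) := by
      refine degree_le_of_natDegree_le ?_
      refine (natDegree_mul_le).trans ?_
      have := natDegree_comp_le (p := q) (q := L)
      simp only [natDegree_C, hLdeg, mul_one, zero_add] at this ⊢
      omega
    have h2 : (C (γ ^ (m - 1) * m * t) * p.comp L).degree ≤ (n : ℕ) := by
      refine degree_le_of_natDegree_le ?_
      refine (natDegree_mul_le).trans ?_
      have h3 := natDegree_comp_le (p := p) (q := L)
      have h4 : p.natDegree ≤ n := natDegree_le_of_degree_le hp
      simp only [natDegree_C, hLdeg, mul_one, zero_add] at h3 ⊢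
      omega
    exact (degree_add_le _ _).trans (max_le h1 h2)
  · intro z
    have key : ∀ r : Polynomial ℂ,
        (r.comp L).eval ((starRingEnd ℂ) t * z + (starRingEnd ℂ) γ) = r.eval z := by
      intro r; rw [eval_comp, hLeval]
    have hcu : (starRingEnd ℂ) ((starRingEnd ℂ) t * z + (starRingEnd ℂ) γ)
        = t * (starRingEnd ℂ) z + γ := by
      simp [mul_comm]
    simp only [phiFam, eval_add, eval_mul, eval_C, key, hcu, ← hγdef]
    have hd : γ ^ (m - 1) * (m : ℂ) * t ≠ 0 := by
      exact mul_ne_zero (mul_ne_zero (pow_ne_zero _ hγ) hm0) ht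
    field_simp
    ring
end
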